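/- The elliptical potential is large only finitely often (Lemma 2.3): fix λ > 0 and vectors z_1, …, z_T ∈ ℝ^d with ‖z_t‖ ≤ 1 for all t, and define Z_t = λI + Σ_{s=1}^{t-1} z_s z_s^⊤. Then for any constant c > 0, the number of indices t ∈ {1,…,T} with ‖z_t‖_{Z_t^{-1}} > c is at most (3d / log(1+c²)) · log(1 + 1/(λ·log(1+c²))). -/

import Mathlib

open Finset Matrix

/-- The matrix-weighted norm ‖v‖_M = √(vᵀ M v). -/
noncomputable def matNorm {d : ℕ} (M : Matrix (Fin d) (Fin d) ℝ) (v : Fin d → ℝ) : ℝ :=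
  Real.sqrt (v ⬝ᵥ M.mulVec v)

section Aux

variable {d : ℕ}

lemma psd_outer (v : Fin d → ℝ) : (vecMulVec v v).PosSemidef := by
  have h : vecMulVec v v = (Matrix.replicateRow Unit v)ᴴ * Matrix.replicateRow Unit v := by
    ext i j
    simp [vecMulVec, Matrix.mul_apply, Matrix.replicateRow, Matrix.conjTranspose]
  rw [h]
  exact posSemidef_conjTranspose_mul_self _

lemma pd_smul_one (lam : ℝ) (hlam : 0 < lam) :
    (lam • (1 : Matrix (Fin d) (Fin d) ℝ)).PosDef := by
  have h : lam • (1 : Matrix (Fin d) (Fin d) ℝ) = Matrix.diagonal (fun _ => lam) := by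
    ext i j
    by_cases hij : i = j <;> simp [hij, Matrix.one_apply, Matrix.diagonal_apply]
  rw [h]
  exact Matrix.PosDef.diagonal (fun _ => hlam)

lemma psd_sum {ι : Type*} [DecidableEq ι] (s : Finset ι) (f : ι → Matrix (Fin d) (Fin d) ℝ)
    (hf : ∀ i ∈ s, (f i).PosSemidef) : (∑ i ∈ s, f i).PosSemidef := by
  induction s using Finset.induction_on with
  | empty => simpa using PosSemidef.zero
  | @insert a s' hni ih =>
    rw [Finset.sum_insert hni]
    exact (hf a (Finset.mem_insert_self a s')).add
      (ih fun i hi => hf i (Finset.mem_insert_of_mem hi))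

lemma quad_bound {W : Matrix (Fin d) (Fin d) ℝ} (hW : W.PosDef) (x v : Fin d → ℝ) :
    2 * (x ⬝ᵥ v) - x ⬝ᵥ W.mulVec x ≤ v ⬝ᵥ W⁻¹.mulVec v := by
  have hInv : W * W⁻¹ = 1 := Matrix.mul_nonsing_inv _ hW.det_pos.ne'.isUnit
  set u : Fin d → ℝ := W⁻¹.mulVec v with hu
  have hWu : W.mulVec u = v := by
    rw [hu, Matrix.mulVec_mulVec, hInv, Matrix.one_mulVec]
  have h0 : 0 ≤ (x - u) ⬝ᵥ W.mulVec (x - u) := by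
    simpa only [star_trivial] using hW.posSemidef.dotProduct_mulVec_nonneg (x - u)
  have hWs : ∀ i j, W i j = W j i := fun i j => by
    have h := congrFun (congrFun hW.isHermitian.eq i) j
    simpa [Matrix.conjTranspose_apply] using h.symm
  have hsym : ∀ a b : Fin d → ℝ, a ⬝ᵥ W.mulVec b = b ⬝ᵥ W.mulVec a := by
    intro a b
    simp only [dotProduct, mulVec, Finset.mul_sum]
    rw [Finset.sum_comm]
    refine Finset.sum_congr rfl fun i _ => Finset.sum_congr rfl fun j _ => ?_
    rw [hWs j i]; ring
  have hexp : (x - u) ⬝ᵥ W.mulVec (x - u)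
      = x ⬝ᵥ W.mulVec x - 2 * (x ⬝ᵥ v) + v ⬝ᵥ W⁻¹.mulVec v := by
    rw [Matrix.mulVec_sub, sub_dotProduct, dotProduct_sub,
      dotProduct_sub, hWu, hsym u x, hWu]
    have h1 : u ⬝ᵥ v = v ⬝ᵥ W⁻¹.mulVec v := by
      rw [hu, dotProduct_comm]
    rw [h1]; ring
  linarith

lemma inv_quad_mono {W Z : Matrix (Fin d) (Fin d) ℝ} (hW : W.PosDef) (hZ : Z.PosDef)
    (hle : (Z - W).PosSemidef) (v : Fin d → ℝ) :
    v ⬝ᵥ Z⁻¹.mulVec v ≤ v ⬝ᵥ W⁻¹.mulVec v := by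
  have hInv : Z * Z⁻¹ = 1 := Matrix.mul_nonsing_inv _ hZ.det_pos.ne'.isUnit
  set x : Fin d → ℝ := Z⁻¹.mulVec v with hx
  have hZx : Z.mulVec x = v := by rw [hx, Matrix.mulVec_mulVec, hInv, Matrix.one_mulVec]
  have h1 : x ⬝ᵥ W.mulVec x ≤ x ⬝ᵥ Z.mulVec x := by
    have h0 : 0 ≤ x ⬝ᵥ (Z - W).mulVec x := by
      simpa only [star_trivial] using hle.dotProduct_mulVec_nonneg x
    rw [Matrix.sub_mulVec, dotProduct_sub] at h0
    linarith
  have h2 := quad_bound hW x v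
  have h3 : x ⬝ᵥ v = v ⬝ᵥ Z⁻¹.mulVec v := by rw [hx, dotProduct_comm]
  have h4 : x ⬝ᵥ Z.mulVec x = v ⬝ᵥ Z⁻¹.mulVec v := by rw [hZx, h3]
  nlinarith [h1, h2, h3, h4]

lemma det_rank_one_update {W : Matrix (Fin d) (Fin d) ℝ} (hW : W.PosDef) (v : Fin d → ℝ) :
    (W + vecMulVec v v).det = W.det * (1 + v ⬝ᵥ W⁻¹.mulVec v) := by
  have hu : IsUnit W.det := hW.det_pos.ne'.isUnit
  have hvv : vecMulVec v v = Matrix.replicateCol Unit v * Matrix.replicateRow Unit v := by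
    ext i j; simp [vecMulVec, Matrix.mul_apply, Matrix.replicateCol, Matrix.replicateRow]
  rw [hvv, Matrix.det_add_replicateCol_mul_replicateRow hu]
  congr 1
  rw [Matrix.det_unique, Matrix.mul_assoc, ← Matrix.replicateCol_mulVec]
  simp [Matrix.replicateRow_mul_replicateCol_apply, Matrix.one_apply]

lemma trace_eq_sum_eigenvalues {M : Matrix (Fin d) (Fin d) ℝ}
    (hH : M.IsHermitian) : M.trace = ∑ i, hH.eigenvalues i := by
  simpa using hH.trace_eq_sum_eigenvalues

lemma det_le_trace_div_pow (hd : 0 < d) {M : Matrix (Fin d) (Fin d) ℝ}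
    (hM : M.PosSemidef) : M.det ≤ (M.trace / d) ^ d := by
  have hH := hM.1
  have hev : ∀ i, 0 ≤ hH.eigenvalues i := hM.eigenvalues_nonneg
  have hdet : M.det = ∏ i, hH.eigenvalues i := by
    rw [hH.det_eq_prod_eigenvalues]; norm_num
  have htr : M.trace = ∑ i, hH.eigenvalues i := trace_eq_sum_eigenvalues hH
  rw [hdet, htr]
  have hgm := Real.geom_mean_le_arith_mean_weighted Finset.univ (fun _ => (d : ℝ)⁻¹)
    hH.eigenvalues (fun _ _ => by positivity)
    (by simp [Finset.card_univ]; field_simp) (fun i _ => hev i)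
  calc ∏ i, hH.eigenvalues i = (∏ i, hH.eigenvalues i ^ ((d : ℝ)⁻¹)) ^ d := by
        rw [← Finset.prod_pow]
        refine Finset.prod_congr rfl fun i _ => ?_
        rw [← Real.rpow_natCast (hH.eigenvalues i ^ ((d:ℝ)⁻¹)) d, ← Real.rpow_mul (hev i)]
        rw [inv_mul_cancel₀ (by exact_mod_cast hd.ne' : (d:ℝ) ≠ 0), Real.rpow_one]
    _ ≤ (∑ i, (d : ℝ)⁻¹ * hH.eigenvalues i) ^ d := by
        apply pow_le_pow_left₀ (Finset.prod_nonneg fun i _ => Real.rpow_nonneg (hev i) _) hgm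
    _ = ((∑ i, hH.eigenvalues i) / d) ^ d := by
        rw [← Finset.mul_sum]; ring_nf

lemma trace_nonneg_of_psd {M : Matrix (Fin d) (Fin d) ℝ} (hM : M.PosSemidef) :
    0 ≤ M.trace := by
  rw [trace_eq_sum_eigenvalues hM.1]
  exact Finset.sum_nonneg fun i _ => hM.eigenvalues_nonneg i

lemma key_scalar {a x : ℝ} (ha : 0 < a) (hx : 0 ≤ x)
    (h : x ≤ Real.log (1 + a * x)) : x ≤ 3 * Real.log (1 + a) := by
  have hla : 0 ≤ Real.log (1 + a) := Real.log_nonneg (by linarith)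
  rcases le_or_gt a 1 with ha1 | ha1
  · rcases eq_or_lt_of_le hx with hx0 | hx0
    · rw [← hx0]; positivity
    · exfalso
      have h1 : Real.log (1 + a * x) ≤ Real.log (1 + x) :=
        Real.log_le_log (by nlinarith) (by nlinarith)
      have h2 : Real.log (1 + x) < (1 + x) - 1 :=
        Real.log_lt_sub_one_of_pos (by linarith) (by intro hh; nlinarith)
      linarith
  · set l := Real.log (1 + a) with hl
    set y : ℝ := 3 * l with hy
    by_contra h'
    push_neg at h'
    have hlog2 : (0.6931471803 : ℝ) < Real.log 2 := Real.log_two_gt_d9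
    have hl2 : Real.log 2 < l := Real.log_lt_log (by norm_num) (by linarith)
    have hy2 : (2 : ℝ) < y := by rw [hy]; nlinarith
    have hx2 : (2 : ℝ) < x := lt_trans hy2 h'
    have key1 : x ≤ l + Real.log (1 + x) := by
      have hmul : 1 + a * x ≤ (1 + a) * (1 + x) := by nlinarith
      have h1 := Real.log_le_log (by nlinarith) hmul
      rw [Real.log_mul (by linarith) (by linarith)] at h1
      linarith
    have he : (2.7182818283 : ℝ) < Real.exp 1 := Real.exp_one_gt_d9
    have hgy : Real.log (1 + y) ≤ 2 * y / 3 := by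
      have h1 : Real.log ((1 + y) / Real.exp 1) ≤ (1 + y) / Real.exp 1 - 1 :=
        Real.log_le_sub_one_of_pos (by positivity)
      rw [Real.log_div (by linarith) (Real.exp_ne_zero 1), Real.log_exp] at h1
      have h2 : (1 + y) / Real.exp 1 ≤ 2 * y / 3 := by
        rw [div_le_div_iff₀ (Real.exp_pos 1) (by norm_num)]
        nlinarith
      linarith
    have hmono : Real.log (1 + x) < Real.log (1 + y) + (x - y) := by
      have h1 : Real.log ((1 + x) / (1 + y)) ≤ (1 + x) / (1 + y) - 1 :=
        Real.log_le_sub_one_of_pos (by positivity)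
      rw [Real.log_div (by linarith) (by linarith)] at h1
      have h2 : (1 + x) / (1 + y) - 1 < x - y := by
        rw [div_sub_one (by linarith : (1:ℝ) + y ≠ 0),
          div_lt_iff₀ (by linarith : (0:ℝ) < 1 + y)]
        nlinarith
      linarith
    linarith

end Aux

theorem elliptical_potential_is_usually_small
    {d : ℕ} (T : ℕ) (lam : ℝ) (hlam : 0 < lam)
    (z : Fin T → Fin d → ℝ)
    (hz : ∀ t, Real.sqrt (z t ⬝ᵥ z t) ≤ 1)
    (Z : Fin T → Matrix (Fin d) (Fin d) ℝ)
    (hZ : ∀ t, Z t = lam • (1 : Matrix (Fin d) (Fin d) ℝ) +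
      ∑ s ∈ Finset.univ.filter (fun s : Fin T => s < t), vecMulVec (z s) (z s))
    (c : ℝ) (hc : 0 < c) :
    ((Finset.univ.filter (fun t : Fin T => c < matNorm (Z t)⁻¹ (z t))).card : ℝ)
      ≤ (3 * d / Real.log (1 + c ^ 2)) *
          Real.log (1 + 1 / (lam * Real.log (1 + c ^ 2))) := by
  have hL : 0 < Real.log (1 + c ^ 2) := Real.log_pos (by nlinarith)
  set L := Real.log (1 + c ^ 2) with hLdef
  set S := Finset.univ.filter (fun t : Fin T => c < matNorm (Z t)⁻¹ (z t)) with hSdef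
  rcases Nat.eq_zero_or_pos d with hd0 | hd
  · subst hd0
    have hS0 : S = ∅ := by
      rw [hSdef]
      refine Finset.filter_false_of_mem fun t _ => ?_
      have : matNorm (Z t)⁻¹ (z t) = 0 := by
        unfold matNorm
        rw [show (z t ⬝ᵥ (Z t)⁻¹.mulVec (z t)) = 0 from by simp [dotProduct]]
        exact Real.sqrt_zero
      rw [this]; exact not_lt.mpr hc.le
    rw [hS0]
    simp
  -- main case
  set k := S.card with hk
  -- per-step matrices
  set Sn : ℕ → Finset (Fin T) := fun n => S.filter (fun s => (s : ℕ) < n) with hSn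
  set M : ℕ → Matrix (Fin d) (Fin d) ℝ :=
    fun n => lam • 1 + ∑ s ∈ Sn n, vecMulVec (z s) (z s) with hMdef
  have hMpd : ∀ n, (M n).PosDef := by
    intro n
    exact (pd_smul_one lam hlam).add_posSemidef
      (psd_sum _ _ fun s _ => psd_outer (z s))
  have hZpd : ∀ t, (Z t).PosDef := by
    intro t
    rw [hZ t]
    exact (pd_smul_one lam hlam).add_posSemidef
      (psd_sum _ _ fun s _ => psd_outer (z s))
  have hnorm2 : ∀ s : Fin T, z s ⬝ᵥ z s ≤ 1 := by
    intro s
    have h0 : 0 ≤ z s ⬝ᵥ z s := by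
      have : 0 ≤ ∑ i, z s i * z s i := Finset.sum_nonneg fun i _ => mul_self_nonneg _
      simpa [dotProduct] using this
    nlinarith [hz s, Real.sq_sqrt h0, Real.sqrt_nonneg (z s ⬝ᵥ z s)]
  -- domination
  have hdom : ∀ (t : Fin T), ((Z t) - M (t : ℕ)).PosSemidef := by
    intro t
    have hsub : Sn (t : ℕ) ⊆ Finset.univ.filter (fun s : Fin T => s < t) := by
      intro s hs
      rw [hSn] at hs
      simp only [Finset.mem_filter] at hs ⊢
      exact ⟨Finset.mem_univ s, hs.2⟩
    have : Z t - M (t : ℕ)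
        = ∑ s ∈ (Finset.univ.filter (fun s : Fin T => s < t)) \ Sn (t : ℕ),
            vecMulVec (z s) (z s) := by
      rw [hZ t, hMdef]
      have h := Finset.sum_sdiff (f := fun s => vecMulVec (z s) (z s)) hsub
      simp only
      rw [add_sub_add_left_eq_sub]
      exact sub_eq_of_eq_add h.symm
    rw [this]
    exact psd_sum _ _ fun s _ => psd_outer (z s)
  -- growth of determinant
  have growth : ∀ n, ((1 + c ^ 2) ^ (Sn n).card) * lam ^ d ≤ (M n).det := by
    intro n
    induction n with
    | zero =>
      have h0 : Sn 0 = ∅ := by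
        rw [hSn]; apply Finset.filter_false_of_mem; intro s _; omega
      rw [h0]
      have : M 0 = lam • 1 := by rw [hMdef]; simp [h0]
      rw [this, Matrix.det_smul]
      simp
    | succ n ih =>
      by_cases hex : ∃ t ∈ S, (t : ℕ) = n
      · obtain ⟨t, htS, htn⟩ := hex
        have hins : Sn (n + 1) = insert t (Sn n) := by
          rw [hSn]
          ext s
          simp only [Finset.mem_filter, Finset.mem_insert]
          constructor
          · rintro ⟨hs, hlt⟩
            rcases Nat.lt_succ_iff_lt_or_eq.mp hlt with h | h
            · exact Or.inr ⟨hs, h⟩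
            · exact Or.inl (Fin.ext (h.trans htn.symm))
          · rintro (rfl | ⟨hs, hlt⟩)
            · exact ⟨htS, by omega⟩
            · exact ⟨hs, by omega⟩
        have htnot : t ∉ Sn n := by
          rw [hSn]; simp only [Finset.mem_filter]; omega
        have hMstep : M (n + 1) = M n + vecMulVec (z t) (z t) := by
          rw [hMdef]
          simp only
          rw [hins, Finset.sum_insert htnot]
          abel
        -- the quadratic form is large
        have hq0 : c ^ 2 < z t ⬝ᵥ (Z t)⁻¹.mulVec (z t) := by
          have := (Finset.mem_filter.mp (hSdef ▸ htS)).2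
          exact (Real.lt_sqrt hc.le).mp this
        have hq : c ^ 2 < z t ⬝ᵥ (M n)⁻¹.mulVec (z t) := by
          have hmono := inv_quad_mono (hMpd n) (hZpd t) (htn ▸ hdom t) (z t)
          linarith
        have hdetstep : (M (n + 1)).det
            = (M n).det * (1 + z t ⬝ᵥ (M n)⁻¹.mulVec (z t)) := by
          rw [hMstep]; exact det_rank_one_update (hMpd n) (z t)
        rw [hdetstep, hins, Finset.card_insert_of_notMem htnot]
        have hdetpos : 0 < (M n).det := (hMpd n).det_pos
        have hbase : (0:ℝ) ≤ (1 + c ^ 2) ^ (Sn n).card * lam ^ d := by positivity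
        calc (1 + c ^ 2) ^ ((Sn n).card + 1) * lam ^ d
            = ((1 + c ^ 2) ^ (Sn n).card * lam ^ d) * (1 + c ^ 2) := by ring
          _ ≤ (M n).det * (1 + z t ⬝ᵥ (M n)⁻¹.mulVec (z t)) := by
              apply mul_le_mul ih (by nlinarith) (by nlinarith) hdetpos.le
      · have hsame : Sn (n + 1) = Sn n := by
          rw [hSn]
          ext s
          simp only [Finset.mem_filter]
          constructor
          · rintro ⟨hs, hlt⟩
            refine ⟨hs, ?_⟩
            rcases Nat.lt_succ_iff_lt_or_eq.mp hlt with h | h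
            · exact h
            · exact absurd ⟨s, hs, h⟩ hex
          · rintro ⟨hs, hlt⟩; exact ⟨hs, by omega⟩
        have : M (n + 1) = M n := by rw [hMdef]; simp only [hsame]
        rw [this, hsame]
        exact ih
  -- final matrix
  have hSnT : Sn T = S := by
    rw [hSn]
    apply Finset.filter_true_of_mem
    intro s _
    exact s.isLt
  have htrace : (M T).trace ≤ lam * d + k := by
    have h3 : (M T).trace = lam * d + ∑ s ∈ S, (vecMulVec (z s) (z s)).trace := by
      rw [hMdef]
      simp only
      rw [Matrix.trace_add, Matrix.trace_smul, Matrix.trace_one, Matrix.trace_sum, hSnT]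
      simp [Fintype.card_fin, smul_eq_mul]
    have h1 : ∀ s : Fin T, (vecMulVec (z s) (z s)).trace ≤ 1 := by
      intro s
      have h2 : (vecMulVec (z s) (z s)).trace = z s ⬝ᵥ z s := by
        simp [Matrix.trace, Matrix.diag, vecMulVec, dotProduct]
      rw [h2]; exact hnorm2 s
    have h2 : ∑ s ∈ S, (vecMulVec (z s) (z s)).trace ≤ (k : ℝ) := by
      calc ∑ s ∈ S, (vecMulVec (z s) (z s)).trace ≤ ∑ s ∈ S, (1:ℝ) :=
            Finset.sum_le_sum fun s _ => h1 s
        _ = (k : ℝ) := by simp [hk]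
    rw [h3]
    linarith
  have hd' : (0:ℝ) < d := by exact_mod_cast hd
  have hL' : L ≠ 0 := hL.ne'
  have hfin1 : ((1 + c ^ 2) ^ k) * lam ^ d ≤ ((lam * d + k)/d) ^ d := by
    have hg := growth T
    rw [hSnT] at hg
    have hdet := det_le_trace_div_pow hd (hMpd T).posSemidef
    have htr0 : 0 ≤ (M T).trace := trace_nonneg_of_psd (hMpd T).posSemidef
    have hstep : ((M T).trace / d) ^ d ≤ ((lam * d + k)/d) ^ d := by
      gcongr
    calc ((1 + c ^ 2) ^ k) * lam ^ d ≤ (M T).det := hg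
      _ ≤ ((M T).trace / d) ^ d := hdet
      _ ≤ ((lam * d + k)/d) ^ d := hstep
  have hfin2 : (1 + c ^ 2) ^ k ≤ (1 + (k:ℝ) / (lam * d)) ^ d := by
    have h1 : ((lam * d + (k:ℝ))/d) ^ d = (1 + (k:ℝ)/(lam*d)) ^ d * lam ^ d := by
      rw [← mul_pow]
      congr 1
      field_simp
    rw [h1] at hfin1
    have hlp : (0:ℝ) < lam ^ d := by positivity
    exact le_of_mul_le_mul_right hfin1 hlp
  have hlog : (k:ℝ) * L ≤ (d:ℝ) * Real.log (1 + (k:ℝ)/(lam*(d:ℝ))) := by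
    have h1 := Real.log_le_log (by positivity) hfin2
    rw [Real.log_pow, Real.log_pow] at h1
    exact_mod_cast h1
  have hax : 1/(lam*L) * ((k:ℝ)*L/(d:ℝ)) = (k:ℝ)/(lam*(d:ℝ)) := by
    field_simp
  have hker := key_scalar (a := 1/(lam*L)) (x := (k:ℝ)*L/(d:ℝ))
    (by positivity) (by positivity)
    (by rw [hax]
        rw [div_le_iff₀ hd']
        linarith [hlog])
  rw [div_le_iff₀ hd'] at hker
  rw [div_mul_eq_mul_div, le_div_iff₀ hL]
  nlinarith [hker]
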